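/- The continuous relaxation is tight: there exists a labeling s* ∈ ∏_{i∈V} S_i such that E(δ(s*)) ≤ E(x) for every x ∈ X; consequently the minimum of E over the relaxed feasible set X is attained and equals the minimum of the discrete MRF energy Σ_{k∈K} f_k(s|_{C_k}) over all labelings s. -/
import Mathlib

open Finset in
lemma aux1 {V : Type} [Fintype V] [DecidableEq V] (S : V → Type) [∀ i, Fintype (S i)]
    (C : Finset V) (g : ((i : C) → S i.1) → ℝ) (x : (i : V) → S i → ℝ)
    (hx : ∀ i, ∑ t, x i t = 1) :
    ∑ s : (i : C) → S i.1, g s * ∏ i : C, x i.1 (s i)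
      = ∑ s : (i : V) → S i, g (fun i => s i.1) * ∏ i, x i (s i) := by
  classical
  set e := Equiv.piEquivPiSubtypeProd (· ∈ C) S with he
  rw [← e.symm.sum_comp (fun s => g (fun i => s i.1) * ∏ i, x i (s i))]
  rw [Fintype.sum_prod_type]
  have h1 : ∀ (a : (i : C) → S i.1) (b : (i : {i // i ∉ C}) → S i.1) (i : C),
      e.symm (a, b) i.1 = a i := by
    intro a b i
    simp [he, Equiv.piEquivPiSubtypeProd, i.2]
  have h2 : ∀ (a : (i : C) → S i.1) (b : (i : {i // i ∉ C}) → S i.1) (i : {i // i ∉ C}),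
      e.symm (a, b) i.1 = b i := by
    intro a b i
    simp [he, Equiv.piEquivPiSubtypeProd, i.2]
  have key : ∀ (a : (i : C) → S i.1) (b : (i : {i // i ∉ C}) → S i.1),
      (g (fun i => e.symm (a, b) i.1) * ∏ i, x i (e.symm (a, b) i))
        = (g a * ∏ i : C, x i.1 (a i)) * ∏ i : {i // i ∉ C}, x i.1 (b i) := by
    intro a b
    have hg : (fun i : C => e.symm (a, b) i.1) = a := by
      funext i; exact h1 a b i
    rw [hg, ← Fintype.prod_subtype_mul_prod_subtype (· ∈ C) (fun i => x i (e.symm (a, b) i))]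
    have hp1 : ∀ i : C, x i.1 (e.symm (a, b) i.1) = x i.1 (a i) := fun i => by rw [h1]
    have hp2 : ∀ i : {i // i ∉ C}, x i.1 (e.symm (a, b) i.1) = x i.1 (b i) := fun i => by rw [h2]
    rw [Finset.prod_congr rfl (fun i _ => hp1 i), Finset.prod_congr rfl (fun i _ => hp2 i)]
    rw [mul_assoc]
    congr!
  simp_rw [key]
  have hb : ∑ b : (i : {i // i ∉ C}) → S i.1, ∏ i : {i // i ∉ C}, x i.1 (b i) = 1 := by
    rw [← Fintype.piFinset_univ, ← Finset.prod_univ_sum]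
    simp [hx]
  simp_rw [← Finset.mul_sum, hb, mul_one]

/-- Tightness of the continuous relaxation: some labeling's indicator vector
minimizes `E` over the relaxed feasible set `X`, so the minimum of `E` over `X`
is attained and equals the minimum of the discrete MRF energy over labelings. -/
theorem stmt2 (V : Type) [Fintype V] [DecidableEq V] [Nonempty V]
    (S : V → Type) [∀ i, Fintype (S i)] [∀ i, DecidableEq (S i)] [∀ i, Nonempty (S i)]
    (K : Type) [Fintype K] (C : K → Finset V)
    (f : (k : K) → ((i : C k) → S i.1) → ℝ)
    (E : ((i : V) → S i → ℝ) → ℝ)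
    (hE : ∀ x, E x = ∑ k, ∑ s : (i : C k) → S i.1, f k s * ∏ i : C k, x i.1 (s i))
    (X : Set ((i : V) → S i → ℝ))
    (hX : X = {x | ∀ i, (∀ t, 0 ≤ x i t) ∧ (∑ t, x i t) = 1})
    (δ : ((i : V) → S i) → ((i : V) → S i → ℝ))
    (hδ : ∀ s i t, δ s i t = if t = s i then (1 : ℝ) else 0) :
    ∃ sstar : (i : V) → S i, δ sstar ∈ X ∧
      (∀ x ∈ X, E (δ sstar) ≤ E x) ∧
      (∀ s : (i : V) → S i,
        (∑ k, f k (fun i => sstar i.1)) ≤ ∑ k, f k (fun i => s i.1)) ∧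
      E (δ sstar) = ∑ k, f k (fun i => sstar i.1) := by
  classical
  set D : ((i : V) → S i) → ℝ := fun s => ∑ k, f k (fun i => s i.1) with hD
  -- choose a minimizer of the discrete energy
  obtain ⟨sstar, -, hmin⟩ := Finset.exists_min_image (Finset.univ : Finset ((i : V) → S i)) D
    Finset.univ_nonempty
  have hmin' : ∀ s, D sstar ≤ D s := fun s => hmin s (Finset.mem_univ s)
  -- indicator vectors are feasible
  have hδX : ∀ s, δ s ∈ X := by
    intro s
    rw [hX]
    intro i
    refine ⟨fun t => ?_, ?_⟩
    · rw [hδ]; split <;> norm_num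
    · simp_rw [hδ]
      simp
  -- discrete energy of an indicator
  have hEδ : ∀ s, E (δ s) = D s := by
    intro s
    rw [hE, hD]
    refine Finset.sum_congr rfl fun k _ => ?_
    have hprod : ∀ sC : (i : C k) → S i.1,
        (∏ i : {x // x ∈ C k}, δ s i.1 (sC i))
          = if sC = (fun i : {x // x ∈ C k} => s i.1) then 1 else 0 := by
      intro sC
      by_cases h : sC = fun i : {x // x ∈ C k} => s i.1
      · subst h; simp [hδ]
      · rw [if_neg h]
        obtain ⟨i, hi⟩ := Function.ne_iff.mp h
        refine Finset.prod_eq_zero (Finset.mem_univ i) ?_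
        rw [hδ, if_neg hi]
    simp_rw [hprod]
    have hsingle := Finset.sum_eq_single
      (s := (Finset.univ : Finset ((i : {x // x ∈ C k}) → S i.1)))
      (f := fun sC => f k sC * if sC = fun i : {x // x ∈ C k} => s i.1 then 1 else 0)
      (fun i : {x // x ∈ C k} => s i.1)
      (fun b _ hb => by simp [hb])
      (fun h => absurd (Finset.mem_univ _) h)
    rw [hsingle]
    simp
  -- expected-energy identity over X
  have hxX : ∀ x ∈ X, (∀ i t, 0 ≤ x i t) ∧ ∀ i, (∑ t, x i t) = 1 := by
    intro x hx
    rw [hX] at hx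
    exact ⟨fun i => (hx i).1, fun i => (hx i).2⟩
  have hEx : ∀ x ∈ X, E x = ∑ s : (i : V) → S i, (∏ i, x i (s i)) * D s := by
    intro x hx
    rw [hE]
    have := fun k => aux1 S (C k) (f k) x (hxX x hx).2
    simp_rw [this]
    rw [Finset.sum_comm]
    refine Finset.sum_congr rfl fun s _ => ?_
    simp only [hD, Finset.mul_sum]
    exact Finset.sum_congr rfl fun k _ => mul_comm _ _
  -- total weight one
  have hw : ∀ x ∈ X, (∑ s : (i : V) → S i, ∏ i, x i (s i)) = 1 := by
    intro x hx
    rw [← Fintype.piFinset_univ, ← Finset.prod_univ_sum]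
    simp [(hxX x hx).2]
  refine ⟨sstar, hδX sstar, ?_, hmin', hEδ sstar⟩
  intro x hx
  rw [hEδ, hEx x hx]
  calc D sstar = ∑ s : (i : V) → S i, (∏ i, x i (s i)) * D sstar := by
        rw [← Finset.sum_mul, hw x hx, one_mul]
    _ ≤ ∑ s : (i : V) → S i, (∏ i, x i (s i)) * D s := by
        refine Finset.sum_le_sum fun s _ => ?_
        exact mul_le_mul_of_nonneg_left (hmin' s)
          (Finset.prod_nonneg fun i _ => (hxX x hx).1 i (s i))
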